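/- Let q = d be a prime power and V a 2n-dimensional symplectic vector space over the field F_d with nondegenerate symplectic form. The number of m-dimensional totally isotropic subspaces of V equals [n choose m]_d · ∏_{i=0}^{m-1} (d^{n-i} + 1), where [n choose m]_d = ∏_{i=0}^{m-1} (d^{n-i}-1)/(d^{m-i}-1) is the Gaussian binomial coefficient. -/

import Mathlib

open scoped BigOperators
open Finset Matrix
open scoped ComplexOrder

attribute [instance] Classical.propDecidable
set_option linter.unusedSectionVars false
set_option linter.unusedVariables false

/-- The character `χ(t) = exp(2πit/d)` on `ZMod d`. -/
noncomputable def chi (d : ℕ) (t : ZMod d) : ℂ :=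
  Complex.exp (2 * Real.pi * Complex.I * (t.val : ℂ) / (d : ℂ))

/-- The standard symplectic form on `(Fin n → R) × (Fin n → R)`. -/
def symp (R : Type) [CommRing R] (n : ℕ) (v w : (Fin n → R) × (Fin n → R)) : R :=
  (∑ i, v.1 i * w.2 i) - ∑ i, v.2 i * w.1 i

/-- Single-particle Weyl operator `w(p,q) = χ(-2⁻¹pq) ẑ(p) x̂(q)` on `ℂ^d`. -/
noncomputable def weyl1 (d : ℕ) (p q : ZMod d) : Matrix (ZMod d) (ZMod d) ℂ :=
  Matrix.of fun x y => chi d (-(2⁻¹ : ZMod d) * p * q + p * x) * (if y = x - q then 1 else 0)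

/-- Multi-particle Weyl operator on `(ℂ^d)^{⊗n}` in coordinates. -/
noncomputable def weyl (d n : ℕ) (p q : Fin n → ZMod d) :
    Matrix (Fin n → ZMod d) (Fin n → ZMod d) ℂ :=
  Matrix.of fun x y =>
    chi d (-(2⁻¹ : ZMod d) * (∑ i, p i * q i) + ∑ i, p i * x i) * (if y = x - q then 1 else 0)

/-- Weyl operator indexed by a phase space point. -/
noncomputable def weylV (d n : ℕ) (v : (Fin n → ZMod d) × (Fin n → ZMod d)) :
    Matrix (Fin n → ZMod d) (Fin n → ZMod d) ℂ :=
  weyl d n v.1 v.2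

/-- Action of the Weyl operator on wave functions:
`(w(p,q)ψ)(y) = χ(-2⁻¹pq + py) ψ(y-q)`. -/
noncomputable def weylAct (d n : ℕ) (p q : Fin n → ZMod d) (ψ : (Fin n → ZMod d) → ℂ) :
    (Fin n → ZMod d) → ℂ :=
  fun y => chi d (-(2⁻¹ : ZMod d) * (∑ i, p i * q i) + ∑ i, p i * y i) * ψ (y - q)

/-- Wigner function of a pure state `ψ`. -/
noncomputable def wignerPure (d n : ℕ) [NeZero d] (ψ : (Fin n → ZMod d) → ℂ)
    (p q : Fin n → ZMod d) : ℂ :=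
  ((d : ℂ) ^ n)⁻¹ * ∑ ξ : Fin n → ZMod d, chi d (-(∑ i, ξ i * p i)) *
    (starRingEnd ℂ) (ψ (q - (2⁻¹ : ZMod d) • ξ)) * ψ (q + (2⁻¹ : ZMod d) • ξ)

namespace CountIso

variable (F : Type) [Field F] [Fintype F] (n : ℕ)

abbrev V := (Fin n → F) × (Fin n → F)

noncomputable def B : LinearMap.BilinForm F (V F n) :=
  LinearMap.mk₂ F (symp F n)
    (by intro v v' w; simp [symp, add_mul, Finset.sum_add_distrib]; ring)
    (by intro c v w; simp [symp, smul_eq_mul, mul_sub, Finset.mul_sum, mul_assoc, mul_left_comm])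
    (by intro v w w'; simp [symp, mul_add, Finset.sum_add_distrib]; ring)
    (by intro c v w; simp [symp, smul_eq_mul, mul_sub, Finset.mul_sum, mul_assoc, mul_left_comm])

lemma B_apply (v w : V F n) : B F n v w = symp F n v w := rfl

lemma B_isAlt : (B F n).IsAlt := by
  intro v
  show symp F n v v = 0
  simp [symp, mul_comm]

lemma B_nondeg : (B F n).Nondegenerate := by
  refine (LinearMap.IsRefl.nondegenerate_iff_separatingLeft (B_isAlt F n).isRefl).mpr ?_
  intro v h
  have h1 : ∀ j, v.1 j = 0 := by
    intro j
    have := h (0, Pi.single j 1)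
    simpa [B_apply, symp, Pi.single_apply, mul_ite] using this
  have h2 : ∀ j, v.2 j = 0 := by
    intro j
    have := h (Pi.single j 1, 0)
    simpa [B_apply, symp, Pi.single_apply, mul_ite] using this
  ext j
  · exact h1 j
  · exact h2 j

end CountIso

namespace CountIso

open Submodule Module

variable {F : Type} [Field F] [Fintype F] {n : ℕ}

lemma mem_orth_of_forall {s : Set (V F n)} {m : V F n} (h : ∀ x ∈ s, B F n x m = 0) :
    m ∈ (B F n).orthogonal (span F s) := by
  intro x hx
  have hs : s ⊆ (LinearMap.ker ((B F n).flip m) : Set (V F n)) := by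
    intro y hy; simpa using h y hy
  have := (span_le.2 hs) hx
  simpa [LinearMap.BilinForm.IsOrtho] using this

lemma span_le_orthogonal {k : ℕ} {f : Fin k → V F n}
    (h : ∀ i j, B F n (f i) (f j) = 0) :
    span F (Set.range f) ≤ (B F n).orthogonal (span F (Set.range f)) := by
  rw [span_le]
  rintro x ⟨i, rfl⟩
  exact mem_orth_of_forall (by rintro y ⟨j, rfl⟩; exact h j i)

lemma span_isotropic {k : ℕ} {f : Fin k → V F n}
    (h : ∀ i j, B F n (f i) (f j) = 0) :
    ∀ v ∈ span F (Set.range f), ∀ w ∈ span F (Set.range f), symp F n v w = 0 := by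
  intro v hv w hw
  exact span_le_orthogonal h hw v hv

end CountIso

namespace CountIso

open Submodule Module

variable {F : Type} [Field F] [Fintype F] {n : ℕ}

local notation "q" => Fintype.card F

lemma card_submodule (W : Submodule F (V F n)) :
    Nat.card W = q ^ (finrank F W) := by
  have : Fintype W := Fintype.ofFinite _
  rw [Nat.card_eq_fintype_card, card_eq_pow_finrank (K := F)]

lemma finrank_V : finrank F (V F n) = 2 * n := by
  simp only [V, Module.finrank_prod, Module.finrank_fintype_fun_eq_card, Fintype.card_fin]
  ring

lemma nat_card_sigma {ι : Type*} [Fintype ι] (f : ι → Type*) [∀ i, Finite (f i)] :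
    Nat.card (Σ i, f i) = ∑ i : ι, Nat.card (f i) := by
  have (i : ι) : Fintype (f i) := Fintype.ofFinite _
  simp [Nat.card_eq_fintype_card, Fintype.card_sigma]

variable (F n) in
def TupSet (m : ℕ) : Type :=
  {f : Fin m → V F n // LinearIndependent F f ∧ ∀ i j, B F n (f i) (f j) = 0}

variable (F n) in
def IsoSet (m : ℕ) : Type :=
  {M : Submodule F (V F n) // finrank F M = m ∧ ∀ v ∈ M, ∀ w ∈ M, symp F n v w = 0}

instance (m : ℕ) : Finite (TupSet F n m) := by
  unfold TupSet; infer_instance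

instance : Finite (Submodule F (V F n)) :=
  Finite.of_injective (fun M => (M : Set (V F n))) fun _ _ h => by
    exact SetLike.coe_injective h

instance (m : ℕ) : Finite (IsoSet F n m) := by
  unfold IsoSet; infer_instance

noncomputable def fiberEquiv (m : ℕ) (M : Submodule F (V F n)) (hM : finrank F M = m) :
    {f : Fin m → V F n // LinearIndependent F f ∧ span F (Set.range f) = M} ≃
      {g : Fin m → M // LinearIndependent F g} where
  toFun f := ⟨fun i => ⟨f.1 i, f.2.2.le (subset_span ⟨i, rfl⟩)⟩,
    LinearIndependent.of_comp M.subtype (by exact f.2.1)⟩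
  invFun g := ⟨fun i => (g.1 i : V F n),
    ⟨g.2.map' M.subtype (ker_subtype M), by
      have hsp : span F (Set.range g.1) = ⊤ :=
        Submodule.eq_top_of_finrank_eq
          (by rw [finrank_span_eq_card g.2, Fintype.card_fin, hM])
      have : (fun i => (g.1 i : V F n)) = M.subtype ∘ g.1 := rfl
      rw [this, Set.range_comp, ← Submodule.map_span, hsp, Submodule.map_top,
        range_subtype]⟩⟩
  left_inv f := Subtype.ext rfl
  right_inv g := Subtype.ext (funext fun i => Subtype.ext rfl)

noncomputable def phi (m : ℕ) : TupSet F n m → IsoSet F n m := fun f =>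
  ⟨span F (Set.range f.1), by rw [finrank_span_eq_card f.2.1, Fintype.card_fin],
    span_isotropic f.2.2⟩

noncomputable def phiFiberEquiv (m : ℕ) (M : IsoSet F n m) :
    {x : TupSet F n m // phi m x = M} ≃
      {f : Fin m → V F n // LinearIndependent F f ∧ span F (Set.range f) = M.1} where
  toFun x := ⟨x.1.1, x.1.2.1, congrArg Subtype.val x.2⟩
  invFun f := ⟨⟨f.1, f.2.1, fun i j =>
      M.2.2 _ (f.2.2.le (subset_span ⟨i, rfl⟩))
        _ (f.2.2.le (subset_span ⟨j, rfl⟩))⟩,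
    Subtype.ext f.2.2⟩
  left_inv x := Subtype.ext (Subtype.ext rfl)
  right_inv f := Subtype.ext rfl

lemma card_tupset_eq (m : ℕ) :
    Nat.card (TupSet F n m) =
      Nat.card (IsoSet F n m) * ∏ i : Fin m, (q ^ m - q ^ (i : ℕ)) := by
  have : Fintype (IsoSet F n m) := Fintype.ofFinite _
  rw [Nat.card_congr (Equiv.sigmaFiberEquiv (phi (F := F) (n := n) m)).symm,
    nat_card_sigma]
  have hfib : ∀ M : IsoSet F n m,
      Nat.card {x : TupSet F n m // phi m x = M} = ∏ i : Fin m, (q ^ m - q ^ (i : ℕ)) := by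
    intro M
    rw [Nat.card_congr ((phiFiberEquiv m M).trans (fiberEquiv m M.1 M.2.1))]
    have := card_linearIndependent (K := F) (V := M.1) (k := m) (le_of_eq M.2.1.symm)
    rw [M.2.1] at this
    exact this
  rw [Finset.sum_congr rfl fun M _ => hfib M, Finset.sum_const, Finset.card_univ,
    smul_eq_mul, Nat.card_eq_fintype_card]

end CountIso

namespace CountIso

open Submodule Module

variable {F : Type} [Field F] [Fintype F] {n : ℕ}

local notation "q" => Fintype.card F

noncomputable def stepEquiv (k : ℕ) :
    TupSet F n (k + 1) ≃
      Σ s : TupSet F n k,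
        ((((B F n).orthogonal (span F (Set.range (s.1 : Fin k → V F n)))) : Set (V F n)) \
          (span F (Set.range (s.1 : Fin k → V F n)) : Set (V F n)) : Set (V F n)) where
  toFun f := ⟨⟨Fin.tail f.1, (linearIndependent_fin_succ.mp f.2.1).1,
      fun i j => f.2.2 i.succ j.succ⟩,
    ⟨f.1 0, ⟨mem_orth_of_forall (by rintro x ⟨j, rfl⟩; exact f.2.2 j.succ 0),
      (linearIndependent_fin_succ.mp f.2.1).2⟩⟩⟩
  invFun := fun ⟨s, v⟩ => ⟨Fin.cons v.1 s.1,
    linearIndependent_fin_cons.mpr ⟨s.2.1, v.2.2⟩, by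
      have hv : v.1 ∈ (B F n).orthogonal (span F (Set.range s.1)) := v.2.1
      intro i j
      refine Fin.cases ?_ ?_ i <;> [skip; intro i'] <;> refine Fin.cases ?_ ?_ j
      · simpa using (B_isAlt F n) v.1
      · intro j'
        simpa using ((B_isAlt F n).isRefl) _ _ (hv (s.1 j') (subset_span ⟨j', rfl⟩))
      · simpa using hv (s.1 i') (subset_span ⟨i', rfl⟩)
      · intro j'
        simpa using s.2.2 i' j'⟩
  left_inv f := Subtype.ext (Fin.cons_self_tail f.1)
  right_inv := fun ⟨s, v⟩ => by
    simp only [Fin.tail_cons, Fin.cons_zero, Subtype.coe_eta, Sigma.mk.inj_iff,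
      heq_eq_eq, and_self]
    rfl

lemma card_tup (k : ℕ) (hk : k ≤ n) :
    Nat.card (TupSet F n k) = ∏ i : Fin k, (q ^ (2 * n - i) - q ^ (i : ℕ)) := by
  induction k with
  | zero =>
    have : Unique (TupSet F n 0) := {
      default := ⟨Fin.elim0, linearIndependent_empty_type, fun i => i.elim0⟩
      uniq := fun f => Subtype.ext (funext fun i => i.elim0) }
    simp [Nat.card_unique]
  | succ k ih =>
    have hFs : Fintype (TupSet F n k) := Fintype.ofFinite _
    rw [Nat.card_congr (stepEquiv k), nat_card_sigma]
    have hfib : ∀ s : TupSet F n k,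
        Nat.card ((((B F n).orthogonal (span F (Set.range (s.1 : Fin k → V F n)))) : Set (V F n)) \
          (span F (Set.range (s.1 : Fin k → V F n)) : Set (V F n)) : Set (V F n)) =
        q ^ (2 * n - k) - q ^ k := by
      intro s
      set M := span F (Set.range (s.1 : Fin k → V F n)) with hMdef
      set W := (B F n).orthogonal M with hWdef
      have hMrank : finrank F M = k := by
        rw [hMdef, finrank_span_eq_card s.2.1, Fintype.card_fin]
      have hWrank : finrank F W = 2 * n - k := by
        rw [hWdef, LinearMap.BilinForm.finrank_orthogonal (B_nondeg F n), finrank_V, hMrank]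
      have hle : (M : Set (V F n)) ⊆ (W : Set (V F n)) := span_le_orthogonal s.2.2
      rw [Nat.card_coe_set_eq, Set.ncard_diff hle (Set.toFinite _),
        ← Nat.card_coe_set_eq, ← Nat.card_coe_set_eq]
      rw [show Nat.card ((W : Set (V F n))) = Nat.card W from rfl,
        show Nat.card ((M : Set (V F n))) = Nat.card M from rfl,
        card_submodule, card_submodule, hWrank, hMrank]
    rw [Finset.sum_congr rfl fun s _ => hfib s, Finset.sum_const, Finset.card_univ,
      smul_eq_mul, ← Nat.card_eq_fintype_card, ih (Nat.le_of_succ_le hk),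
      Fin.prod_univ_castSucc]
    simp only [Fin.coe_castSucc, Fin.val_last]

end CountIso


/-- The number of m-dimensional totally isotropic subspaces of the standard
2n-dimensional symplectic space over a finite field of order d equals the Gaussian
binomial `[n m]_d` times `∏_{i=0}^{m-1}(d^{n-i}+1)`. -/
theorem count_isotropic_subspaces (F : Type) [Field F] [Fintype F] (d n m : ℕ)
    (hd : Fintype.card F = d) (hm : m ≤ n) :
    (Nat.card {M : Submodule F ((Fin n → F) × (Fin n → F)) //
        Module.finrank F M = m ∧ ∀ v ∈ M, ∀ w ∈ M, symp F n v w = 0} : ℚ) =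
      (∏ i ∈ Finset.range m, (((d : ℚ) ^ (n - i) - 1) / ((d : ℚ) ^ (m - i) - 1))) *
        ∏ i ∈ Finset.range m, ((d : ℚ) ^ (n - i) + 1) := by
  subst hd
  set q := Fintype.card F with hq
  have hq2 : 1 < q := Fintype.one_lt_card
  have hqQ : (1 : ℚ) < (q : ℚ) := by exact_mod_cast hq2
  have hq0 : (q : ℚ) ≠ 0 := by positivity
  have hkey : (Nat.card (CountIso.IsoSet F n m)) *
      ∏ i ∈ Finset.range m, (q ^ m - q ^ i) =
      ∏ i ∈ Finset.range m, (q ^ (2 * n - i) - q ^ i) := by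
    rw [← Fin.prod_univ_eq_prod_range (fun i => q ^ m - q ^ i) m,
      ← Fin.prod_univ_eq_prod_range (fun i => q ^ (2 * n - i) - q ^ i) m,
      ← CountIso.card_tupset_eq, CountIso.card_tup m hm]
  have hNid : Nat.card {M : Submodule F ((Fin n → F) × (Fin n → F)) //
        Module.finrank F M = m ∧ ∀ v ∈ M, ∀ w ∈ M, symp F n v w = 0}
      = Nat.card (CountIso.IsoSet F n m) := rfl
  rw [hNid]
  have hA : ((∏ i ∈ Finset.range m, (q ^ m - q ^ i) : ℕ) : ℚ)
      = ∏ i ∈ Finset.range m, ((q : ℚ) ^ m - (q : ℚ) ^ i) := by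
    rw [Nat.cast_prod]
    refine Finset.prod_congr rfl fun i hi => ?_
    rw [Nat.cast_sub (Nat.pow_le_pow_right hq2.le (le_of_lt (Finset.mem_range.mp hi)))]
    push_cast; ring
  have hB : ((∏ i ∈ Finset.range m, (q ^ (2 * n - i) - q ^ i) : ℕ) : ℚ)
      = ∏ i ∈ Finset.range m, ((q : ℚ) ^ (2 * n - i) - (q : ℚ) ^ i) := by
    rw [Nat.cast_prod]
    refine Finset.prod_congr rfl fun i hi => ?_
    have hi' := Finset.mem_range.mp hi
    rw [Nat.cast_sub (Nat.pow_le_pow_right hq2.le (by omega))]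
    push_cast; ring
  have hAne : ∏ i ∈ Finset.range m, ((q : ℚ) ^ m - (q : ℚ) ^ i) ≠ 0 := by
    refine Finset.prod_ne_zero_iff.mpr fun i hi => ?_
    have hi' := Finset.mem_range.mp hi
    have : (q : ℚ) ^ i < (q : ℚ) ^ m := pow_lt_pow_right₀ hqQ hi'
    exact sub_ne_zero.mpr (ne_of_gt this)
  have hN : (Nat.card (CountIso.IsoSet F n m) : ℚ) =
      (∏ i ∈ Finset.range m, ((q : ℚ) ^ (2 * n - i) - (q : ℚ) ^ i)) /
        ∏ i ∈ Finset.range m, ((q : ℚ) ^ m - (q : ℚ) ^ i) := by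
    rw [eq_div_iff hAne, ← hA, ← hB, ← Nat.cast_mul, hkey]
  rw [hN, ← Finset.prod_mul_distrib, ← Finset.prod_div_distrib]
  refine Finset.prod_congr rfl fun i hi => ?_
  have hi' := Finset.mem_range.mp hi
  have h1 : (q : ℚ) ^ (2 * n - i) = q ^ i * (q ^ (n - i) * q ^ (n - i)) := by
    rw [← pow_add, ← pow_add]; congr 1; omega
  have h2 : (q : ℚ) ^ m = q ^ i * q ^ (m - i) := by
    rw [← pow_add]; congr 1; omega
  have hb : (1 : ℚ) < (q : ℚ) ^ (m - i) := one_lt_pow₀ hqQ (by omega)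
  have hbne : (q : ℚ) ^ (m - i) - 1 ≠ 0 := sub_ne_zero.mpr (ne_of_gt hb)
  have hcne : (q : ℚ) ^ i ≠ 0 := pow_ne_zero _ hq0
  have hden : (q : ℚ) ^ i * (q : ℚ) ^ (m - i) - (q : ℚ) ^ i ≠ 0 := by
    have : (q : ℚ) ^ i * (q : ℚ) ^ (m - i) - (q : ℚ) ^ i
        = (q : ℚ) ^ i * ((q : ℚ) ^ (m - i) - 1) := by ring
    rw [this]; exact mul_ne_zero hcne hbne
  rw [h1, h2, div_mul_eq_mul_div, div_eq_div_iff hden hbne]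
  ring
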